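/- arXiv:math-ph/0511023 — 2 statements merged into one kernel-verified Lean document; each statement's English description precedes it below -/
import Mathlib

section
/- With Ω = [[Ω₁,Γ],[Γ†,Ω₂]] bounded self-adjoint on H = H₁ ⊕ H₂, the decoupled subspace H₂d = H₂ ⊖ H₂c (where H₂c = O_Ω(H₁) ⊖ H₁) is invariant under Ω, and Ω restricted to H₂d equals Ω₂ restricted to H₂d; in particular Γ vanishes on H₂d. -/
open ContinuousLinearMap MeasureTheory

/-- The orbit of a set `S` under an operator `Ω`: the smallest closed `Ω`-invariant
subspace containing `S`. -/
noncomputable def orbit {H : Type*} [NormedAddCommGroup H] [InnerProductSpace ℂ H]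
    (Ω : H →L[ℂ] H) (S : Set H) : Submodule ℂ H :=
  sInf {K : Submodule ℂ H | S ⊆ K ∧ IsClosed (K : Set H) ∧ ∀ x ∈ K, Ω x ∈ K}

variable {H₁ H₂ : Type*} [NormedAddCommGroup H₁] [InnerProductSpace ℂ H₁] [CompleteSpace H₁]
  [NormedAddCommGroup H₂] [InnerProductSpace ℂ H₂] [CompleteSpace H₂]

/-- Inclusion of `H₁` into the Hilbert space direct sum `H₁ ⊕ H₂`. -/
noncomputable def inl' : H₁ →L[ℂ] WithLp 2 (H₁ × H₂) :=
  (WithLp.prodContinuousLinearEquiv 2 ℂ H₁ H₂).symm.toContinuousLinearMap ∘L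
    ContinuousLinearMap.inl ℂ H₁ H₂

/-- Inclusion of `H₂` into the Hilbert space direct sum `H₁ ⊕ H₂`. -/
noncomputable def inr' : H₂ →L[ℂ] WithLp 2 (H₁ × H₂) :=
  (WithLp.prodContinuousLinearEquiv 2 ℂ H₁ H₂).symm.toContinuousLinearMap ∘L
    ContinuousLinearMap.inr ℂ H₁ H₂

/-- The block operator `[[Ω₁, Γ], [Γ†, Ω₂]]` on `H₁ ⊕ H₂`. -/
noncomputable def blockOp (Ω₁ : H₁ →L[ℂ] H₁) (Ω₂ : H₂ →L[ℂ] H₂) (Γ : H₂ →L[ℂ] H₁) :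
    WithLp 2 (H₁ × H₂) →L[ℂ] WithLp 2 (H₁ × H₂) :=
  (WithLp.prodContinuousLinearEquiv 2 ℂ H₁ H₂).symm.toContinuousLinearMap ∘L
    ((Ω₁ ∘L ContinuousLinearMap.fst ℂ H₁ H₂ + Γ ∘L ContinuousLinearMap.snd ℂ H₁ H₂).prod
      ((ContinuousLinearMap.adjoint Γ) ∘L ContinuousLinearMap.fst ℂ H₁ H₂ +
        Ω₂ ∘L ContinuousLinearMap.snd ℂ H₁ H₂)) ∘L
    (WithLp.prodContinuousLinearEquiv 2 ℂ H₁ H₂).toContinuousLinearMap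

/-- `H₁` as a subspace of `H₁ ⊕ H₂`. -/
noncomputable def sub1 : Submodule ℂ (WithLp 2 (H₁ × H₂)) := LinearMap.range ((inl' : H₁ →L[ℂ] WithLp 2 (H₁ × H₂)) : H₁ →ₗ[ℂ] WithLp 2 (H₁ × H₂))

/-- `H₂` as a subspace of `H₁ ⊕ H₂`. -/
noncomputable def sub2 : Submodule ℂ (WithLp 2 (H₁ × H₂)) := LinearMap.range ((inr' : H₂ →L[ℂ] WithLp 2 (H₁ × H₂)) : H₂ →ₗ[ℂ] WithLp 2 (H₁ × H₂))

section Aux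

lemma inl'_fst (u : H₁) : (inl' u : WithLp 2 (H₁ × H₂)).fst = u := rfl
lemma inl'_snd (u : H₁) : (inl' u : WithLp 2 (H₁ × H₂)).snd = (0 : H₂) := rfl
lemma inr'_fst (v : H₂) : (inr' v : WithLp 2 (H₁ × H₂)).fst = (0 : H₁) := rfl
lemma inr'_snd (v : H₂) : (inr' v : WithLp 2 (H₁ × H₂)).snd = v := rfl

lemma withLp_ext {x y : WithLp 2 (H₁ × H₂)} (h1 : x.fst = y.fst) (h2 : x.snd = y.snd) :
    x = y := congrArg (WithLp.toLp 2) (Prod.ext h1 h2)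

lemma blockOp_fst (Ω₁ : H₁ →L[ℂ] H₁) (Ω₂ : H₂ →L[ℂ] H₂) (Γ : H₂ →L[ℂ] H₁)
    (x : WithLp 2 (H₁ × H₂)) :
    (blockOp Ω₁ Ω₂ Γ x).fst = Ω₁ x.fst + Γ x.snd := rfl

lemma blockOp_snd (Ω₁ : H₁ →L[ℂ] H₁) (Ω₂ : H₂ →L[ℂ] H₂) (Γ : H₂ →L[ℂ] H₁)
    (x : WithLp 2 (H₁ × H₂)) :
    (blockOp Ω₁ Ω₂ Γ x).snd = (ContinuousLinearMap.adjoint Γ) x.fst + Ω₂ x.snd := rfl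

lemma mem_sub1 (x : WithLp 2 (H₁ × H₂)) : x ∈ (sub1 : Submodule ℂ (WithLp 2 (H₁ × H₂))) ↔
    x.snd = 0 := by
  constructor
  · intro hx; obtain ⟨u, rfl⟩ := LinearMap.mem_range.mp hx; rfl
  · intro h
    exact LinearMap.mem_range.mpr ⟨x.fst, withLp_ext (inl'_fst _) ((inl'_snd _).trans h.symm)⟩

lemma mem_sub2 (x : WithLp 2 (H₁ × H₂)) : x ∈ (sub2 : Submodule ℂ (WithLp 2 (H₁ × H₂))) ↔
    x.fst = 0 := by
  constructor
  · intro hx; obtain ⟨v, rfl⟩ := LinearMap.mem_range.mp hx; rfl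
  · intro h
    exact LinearMap.mem_range.mpr ⟨x.snd, withLp_ext ((inr'_fst _).trans h.symm) (inr'_snd _)⟩

lemma sub1_orth : (sub1 : Submodule ℂ (WithLp 2 (H₁ × H₂)))ᗮ = sub2 := by
  ext x
  rw [Submodule.mem_orthogonal, mem_sub2]
  constructor
  · intro h
    have := h (inl' x.fst) (LinearMap.mem_range.mpr ⟨x.fst, rfl⟩)
    simpa [WithLp.prod_inner_apply, inl'_fst, inl'_snd, inner_self_eq_zero] using this
  · rintro h u hu
    obtain ⟨v, rfl⟩ := LinearMap.mem_range.mp hu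
    simp [WithLp.prod_inner_apply, inl'_fst, inl'_snd, h]

lemma blockOp_symm {Ω₁ : H₁ →L[ℂ] H₁} {Ω₂ : H₂ →L[ℂ] H₂} (Γ : H₂ →L[ℂ] H₁)
    (hΩ₁ : IsSelfAdjoint Ω₁) (hΩ₂ : IsSelfAdjoint Ω₂) (x y : WithLp 2 (H₁ × H₂)) :
    inner ℂ (blockOp Ω₁ Ω₂ Γ x) y = inner ℂ x (blockOp Ω₁ Ω₂ Γ y) := by
  simp only [WithLp.prod_inner_apply, blockOp_fst, blockOp_snd, inner_add_left, inner_add_right,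
    ContinuousLinearMap.adjoint_inner_left, ContinuousLinearMap.adjoint_inner_right]
  have e1 : inner ℂ (Ω₁ x.fst) y.fst = inner ℂ x.fst (Ω₁ y.fst) := by
    conv_lhs => rw [← hΩ₁.adjoint_eq]
    exact ContinuousLinearMap.adjoint_inner_left _ _ _
  have e2 : inner ℂ (Ω₂ x.snd) y.snd = inner ℂ x.snd (Ω₂ y.snd) := by
    conv_lhs => rw [← hΩ₂.adjoint_eq]
    exact ContinuousLinearMap.adjoint_inner_left _ _ _
  change inner ℂ (blockOp Ω₁ Ω₂ Γ x).fst y.fst + inner ℂ (blockOp Ω₁ Ω₂ Γ x).snd y.snd =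
    inner ℂ x.fst (blockOp Ω₁ Ω₂ Γ y).fst + inner ℂ x.snd (blockOp Ω₁ Ω₂ Γ y).snd
  simp only [blockOp_fst, blockOp_snd, inner_add_left, inner_add_right,
    ContinuousLinearMap.adjoint_inner_left, ContinuousLinearMap.adjoint_inner_right]
  rw [e1, e2]
  ring

end Aux

/-- the decoupled subspace `H₂d = H₂ ⊖ H₂c` is `Ω`-invariant, and on it `Ω`
acts as `Ω₂`; in particular `Γ` vanishes on `H₂d`. -/
theorem decoupled_invariant
    (Ω₁ : H₁ →L[ℂ] H₁) (Ω₂ : H₂ →L[ℂ] H₂) (Γ : H₂ →L[ℂ] H₁)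
    (hΩ₁ : IsSelfAdjoint Ω₁) (hΩ₂ : IsSelfAdjoint Ω₂)
    (Ω : WithLp 2 (H₁ × H₂) →L[ℂ] WithLp 2 (H₁ × H₂)) (hΩ : Ω = blockOp Ω₁ Ω₂ Γ)
    (H2c H2d : Submodule ℂ (WithLp 2 (H₁ × H₂)))
    (hH2c : H2c = orbit Ω (sub1 : Submodule ℂ (WithLp 2 (H₁ × H₂))) ⊓
      (sub1 : Submodule ℂ (WithLp 2 (H₁ × H₂)))ᗮ)
    (hH2d : H2d = (sub2 : Submodule ℂ (WithLp 2 (H₁ × H₂))) ⊓ H2cᗮ) :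
    (∀ x ∈ H2d, Ω x ∈ H2d) ∧
    (∀ y : H₂, inr' y ∈ H2d → Ω (inr' y) = inr' (Ω₂ y) ∧ Γ y = 0) := by
  set O : Submodule ℂ (WithLp 2 (H₁ × H₂)) :=
    orbit Ω (sub1 : Submodule ℂ (WithLp 2 (H₁ × H₂))) with hO
  have hsub1O : (sub1 : Submodule ℂ (WithLp 2 (H₁ × H₂))) ≤ O := by
    intro x hx
    rw [hO, orbit, Submodule.mem_sInf]
    exact fun K hK => hK.1 hx
  have hinvO : ∀ x ∈ O, Ω x ∈ O := by
    intro x hx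
    rw [hO, orbit, Submodule.mem_sInf] at hx ⊢
    exact fun K hK => hK.2.2 x (hx K hK)
  -- key: H2d = Oᗮ
  have hkey : H2d = Oᗮ := by
    ext x
    rw [hH2d, Submodule.mem_inf, Submodule.mem_orthogonal]
    constructor
    · rintro ⟨hx2, hxc⟩ z hz
      -- decompose z = inl' z.fst + w, w ∈ H2c
      have hw : z - inl' z.fst ∈ H2c := by
        rw [hH2c, Submodule.mem_inf]
        refine ⟨O.sub_mem hz (hsub1O (LinearMap.mem_range.mpr ⟨z.fst, rfl⟩)), ?_⟩
        rw [sub1_orth, mem_sub2]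
        show z.fst - (inl' z.fst : WithLp 2 (H₁ × H₂)).fst = 0
        rw [inl'_fst, sub_self]
      have h1 : inner ℂ (inl' z.fst) x = 0 := by
        rw [mem_sub2] at hx2
        simp [WithLp.prod_inner_apply, inl'_fst, inl'_snd, hx2]
      have h2 : inner ℂ (z - inl' z.fst) x = 0 :=
        (Submodule.mem_orthogonal H2c x).mp hxc _ hw
      have := h1 ▸ h2
      calc inner ℂ z x = inner ℂ (inl' z.fst) x + inner ℂ (z - inl' z.fst) x := by
            rw [← inner_add_left]
            congr 1
            abel
        _ = 0 := by rw [h1, h2, add_zero]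
    · intro h
      constructor
      · rw [← sub1_orth]
        exact fun u hu => h u (hsub1O hu)
      · intro u hu
        rw [hH2c, Submodule.mem_inf] at hu
        exact h u hu.1
  have hsymm : ∀ a b : WithLp 2 (H₁ × H₂), inner ℂ (Ω a) b = inner ℂ a (Ω b) := by
    rw [hΩ]; exact blockOp_symm Γ hΩ₁ hΩ₂
  have part1 : ∀ x ∈ H2d, Ω x ∈ H2d := by
    intro x hx
    rw [hkey] at hx ⊢
    rw [Submodule.mem_orthogonal] at hx ⊢
    intro z hz
    rw [← hsymm z x]
    exact hx _ (hinvO z hz)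
  refine ⟨part1, fun y hy => ?_⟩
  have hmem := part1 _ hy
  rw [hH2d, Submodule.mem_inf, mem_sub2] at hmem
  have hΓ : Γ y = 0 := by
    have : (Ω (inr' y)).fst = 0 := hmem.1
    rw [hΩ, blockOp_fst, inr'_fst, inr'_snd, map_zero, zero_add] at this
    exact this
  refine ⟨?_, hΓ⟩
  rw [hΩ]
  refine withLp_ext ?_ ?_
  · rw [blockOp_fst, inr'_fst, inr'_snd, map_zero, zero_add, hΓ]
    exact (inr'_fst _).symm
  · rw [blockOp_snd, inr'_fst, inr'_snd, map_zero, zero_add]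
    exact (inr'_snd _).symm
end

section
/- Let Ω be a bounded self-adjoint operator on H₁ ⊕ H₂ with block form [[Ω₁,Γ],[Γ†,Ω₂]], and suppose dim H₁ < ∞. Then the restriction Ωc of Ω to O_Ω(Ran Γ ⊕ Ran Γ†) has finite spectral multiplicity, bounded by 2·dim H₁. -/
open ContinuousLinearMap MeasureTheory

variable {H₁ H₂ : Type*} [NormedAddCommGroup H₁] [InnerProductSpace ℂ H₁] [CompleteSpace H₁]
  [NormedAddCommGroup H₂] [InnerProductSpace ℂ H₂] [CompleteSpace H₂]

lemma subset_orbit {H : Type*} [NormedAddCommGroup H] [InnerProductSpace ℂ H]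
    (Ω : H →L[ℂ] H) (S : Set H) : S ⊆ orbit Ω S := by
  intro x hx
  have : x ∈ orbit Ω S := by
    rw [orbit, Submodule.mem_sInf]
    exact fun K hK => hK.1 hx
  exact this

lemma orbit_isClosed {H : Type*} [NormedAddCommGroup H] [InnerProductSpace ℂ H]
    (Ω : H →L[ℂ] H) (S : Set H) : IsClosed ((orbit Ω S : Submodule ℂ H) : Set H) := by
  rw [orbit, Submodule.coe_sInf]
  exact isClosed_biInter fun K hK => hK.2.1

lemma orbit_invariant {H : Type*} [NormedAddCommGroup H] [InnerProductSpace ℂ H]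
    (Ω : H →L[ℂ] H) (S : Set H) : ∀ x ∈ orbit Ω S, Ω x ∈ orbit Ω S := by
  intro x hx
  rw [orbit, Submodule.mem_sInf] at hx ⊢
  exact fun K hK => hK.2.2 x (hx K hK)

lemma orbit_le {H : Type*} [NormedAddCommGroup H] [InnerProductSpace ℂ H]
    (Ω : H →L[ℂ] H) {S : Set H} {K : Submodule ℂ H} (h1 : S ⊆ K)
    (h2 : IsClosed (K : Set H)) (h3 : ∀ x ∈ K, Ω x ∈ K) : orbit Ω S ≤ K :=
  sInf_le ⟨h1, h2, h3⟩

lemma span_le_orbit {H : Type*} [NormedAddCommGroup H] [InnerProductSpace ℂ H]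
    (Ω : H →L[ℂ] H) (S : Set H) : Submodule.span ℂ S ≤ orbit Ω S :=
  Submodule.span_le.mpr (subset_orbit Ω S)

lemma exists_span_fun {E : Type*} [NormedAddCommGroup E] [Module ℂ E]
    (K : Submodule ℂ E) [FiniteDimensional ℂ K] (n : ℕ) (h : Module.finrank ℂ K ≤ n) :
    ∃ w : Fin n → E, (∀ i, w i ∈ K) ∧
      (K : Set E) ⊆ ↑(Submodule.span ℂ (Set.range w)) := by
  set b := Module.finBasis ℂ K
  refine ⟨fun i => if hi : (i : ℕ) < Module.finrank ℂ K then (b ⟨i, hi⟩ : E) else 0,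
    fun i => ?_, fun x hx => ?_⟩
  · by_cases hi : (i : ℕ) < Module.finrank ℂ K
    · simp only [dif_pos hi]; exact (b ⟨i, hi⟩).2
    · simp only [dif_neg hi]; exact K.zero_mem
  · have hb : (⟨x, hx⟩ : K) ∈ Submodule.span ℂ (Set.range b) := by
      rw [b.span_eq]; trivial
    have hmap : x ∈ Submodule.map K.subtype (Submodule.span ℂ (Set.range b)) :=
      ⟨⟨x, hx⟩, hb, rfl⟩
    rw [Submodule.map_span] at hmap
    refine Submodule.span_mono ?_ hmap
    rintro _ ⟨_, ⟨j, rfl⟩, rfl⟩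
    refine ⟨⟨j, lt_of_lt_of_le j.2 h⟩, ?_⟩
    simp [j.2]

/-- if `H₁` is finite dimensional, the restriction of `Ω` to
`O_Ω(Ran Γ ⊕ Ran Γ†)` has spectral multiplicity at most `2 dim H₁`: that subspace is
generated under `Ω` by at most `2 dim H₁` vectors. -/
theorem multiplicity_le_of_finiteDimensional [FiniteDimensional ℂ H₁]
    (Ω₁ : H₁ →L[ℂ] H₁) (Ω₂ : H₂ →L[ℂ] H₂) (Γ : H₂ →L[ℂ] H₁)
    (hΩ₁ : IsSelfAdjoint Ω₁) (hΩ₂ : IsSelfAdjoint Ω₂)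
    (Ω : WithLp 2 (H₁ × H₂) →L[ℂ] WithLp 2 (H₁ × H₂)) (hΩ : Ω = blockOp Ω₁ Ω₂ Γ)
    (Hc : Submodule ℂ (WithLp 2 (H₁ × H₂)))
    (hHc : Hc = orbit Ω
      (inl' '' Set.range Γ ∪ inr' '' Set.range (ContinuousLinearMap.adjoint Γ))) :
    ∃ v : Fin (2 * Module.finrank ℂ H₁) → WithLp 2 (H₁ × H₂),
      (∀ i, v i ∈ Hc) ∧ orbit Ω (Set.range v) = Hc := by
  subst hHc
  set n := Module.finrank ℂ H₁ with hn
  set S : Set (WithLp 2 (H₁ × H₂)) :=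
    inl' '' Set.range Γ ∪ inr' '' Set.range (ContinuousLinearMap.adjoint Γ) with hS
  set K₁ : Submodule ℂ H₁ := LinearMap.range (Γ : H₂ →ₗ[ℂ] H₁) with hK₁
  set K₂ : Submodule ℂ H₂ := LinearMap.range ((ContinuousLinearMap.adjoint Γ) : H₁ →ₗ[ℂ] H₂) with hK₂
  haveI : FiniteDimensional ℂ K₂ :=
    LinearMap.finiteDimensional_range ((ContinuousLinearMap.adjoint Γ) : H₁ →ₗ[ℂ] H₂)
  obtain ⟨w, hw1, hw2⟩ := exists_span_fun K₁ n (Submodule.finrank_le K₁)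
  obtain ⟨u, hu1, hu2⟩ := exists_span_fun K₂ n
    (LinearMap.finrank_range_le ((ContinuousLinearMap.adjoint Γ) : H₁ →ₗ[ℂ] H₂))
  set v : Fin (2 * n) → WithLp 2 (H₁ × H₂) := fun i =>
    if h : (i : ℕ) < n then inl' (w ⟨i, h⟩) else inr' (u ⟨(i : ℕ) - n, by omega⟩) with hv
  have hrangeΓ : (K₁ : Set H₁) = Set.range Γ := LinearMap.coe_range _
  have hrangeΓ' : (K₂ : Set H₂) = Set.range (ContinuousLinearMap.adjoint Γ) :=
    LinearMap.coe_range _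
  have hvS : ∀ i, v i ∈ S := by
    intro i
    by_cases h : (i : ℕ) < n
    · simp only [hv, dif_pos h]
      exact Or.inl ⟨w ⟨i, h⟩, by rw [← hrangeΓ]; exact hw1 _, rfl⟩
    · simp only [hv, dif_neg h]
      exact Or.inr ⟨u ⟨(i : ℕ) - n, by omega⟩, by rw [← hrangeΓ']; exact hu1 _, rfl⟩
  refine ⟨v, fun i => subset_orbit Ω S (hvS i), le_antisymm ?_ ?_⟩
  · exact orbit_le Ω (fun x ⟨i, hi⟩ => hi ▸ subset_orbit Ω S (hvS i))
      (orbit_isClosed Ω S) (orbit_invariant Ω S)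
  · refine orbit_le Ω ?_ (orbit_isClosed Ω _) (orbit_invariant Ω _)
    have hspan : S ⊆ ↑(Submodule.span ℂ (Set.range v)) := by
      rintro x (⟨a, ⟨y, rfl⟩, rfl⟩ | ⟨a, ⟨y, rfl⟩, rfl⟩)
      · have ha : Γ y ∈ Submodule.span ℂ (Set.range w) :=
          hw2 (show Γ y ∈ (K₁ : Set H₁) from ⟨y, rfl⟩)
        have := Submodule.apply_mem_span_image_of_mem_span ((inl' : H₁ →L[ℂ] WithLp 2 (H₁ × H₂)) : H₁ →ₗ[ℂ] WithLp 2 (H₁ × H₂)) ha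
        refine Submodule.span_mono ?_ this
        rintro _ ⟨_, ⟨j, rfl⟩, rfl⟩
        exact ⟨⟨j, by omega⟩, by simp [hv, j.2]⟩
      · have ha : (ContinuousLinearMap.adjoint Γ) y ∈ Submodule.span ℂ (Set.range u) :=
          hu2 (show _ ∈ (K₂ : Set H₂) from ⟨y, rfl⟩)
        have := Submodule.apply_mem_span_image_of_mem_span ((inr' : H₂ →L[ℂ] WithLp 2 (H₁ × H₂)) : H₂ →ₗ[ℂ] WithLp 2 (H₁ × H₂)) ha
        refine Submodule.span_mono ?_ this
        rintro _ ⟨_, ⟨j, rfl⟩, rfl⟩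
        refine ⟨⟨n + j, by omega⟩, ?_⟩
        have hnj : ¬ ((n + (j : ℕ)) < n) := by omega
        simp [hv, hnj]
    exact hspan.trans (span_le_orbit Ω _)
end
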